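/- For every positive integer c there exists N such that every integer k ≥ N which is divisible by 4 can be written as k = Σ_{i=1}^{80} aᵢ(aᵢ+1) with integers a₁,…,a₈₀ all at least c. -/

import Mathlib

lemma sq_le_sq_nat {a b : ℕ} (h : a * a ≤ b * b) : a ≤ b := by
  by_contra hc
  push_neg at hc
  nlinarith

lemma pair_pronic (u v : ℕ) (h : v ≤ u) :
    (u + v) * ((u + v) + 1) + (u - v) * ((u - v) + 1)
      = 2 * (u * (u + 1)) + 2 * (v * v) := by
  zify [h]; ring

set_option maxHeartbeats 1000000 in
set_option maxRecDepth 100000 in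
theorem stmt1 (c : ℕ) : ∃ N : ℕ, ∀ k : ℕ, N ≤ k → 4 ∣ k →
    ∃ a : Fin 80 → ℕ, (∀ i, c ≤ a i) ∧ k = ∑ i, a i * (a i + 1) := by
  refine ⟨72 * (c * (c + 1)) + 8 * ((2 * c + 51) * (2 * c + 51)), fun k hk hdvd => ?_⟩
  obtain ⟨t, ht⟩ := hdvd
  obtain ⟨w, hw⟩ := Nat.even_mul_succ_self c
  have h72 : 72 * (c * (c + 1)) ≤ k := by omega
  obtain ⟨K, hK⟩ := Nat.exists_eq_add_of_le h72
  have hKbig : 8 * ((2 * c + 51) * (2 * c + 51)) ≤ K := by omega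
  -- u₀ = sqrt (K/8)
  set u₀ := Nat.sqrt (K / 8) with hu₀
  have h3 : 2 * c + 51 ≤ u₀ := by
    rw [hu₀]
    rw [Nat.le_sqrt]
    rw [Nat.le_div_iff_mul_le (by norm_num : (0:ℕ) < 8)]
    linarith [hKbig]
  obtain ⟨u, hu⟩ : ∃ u, u₀ = u + 1 := ⟨u₀ - 1, by omega⟩
  have hcu : c + 50 ≤ u := by omega
  -- 8 * u * (u+1) ≤ K
  have hPdiv : u * (u + 1) ≤ K / 8 := by
    calc u * (u + 1) = u * u₀ := by rw [hu]
    _ ≤ u₀ * u₀ := Nat.mul_le_mul_right u₀ (by omega)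
    _ ≤ K / 8 := by have := Nat.sqrt_le' (K / 8); rw [← hu₀] at this; nlinarith
  have hPK : 8 * (u * (u + 1)) ≤ K := by
    have h1 := Nat.div_add_mod K 8
    have h2 : K % 8 < 8 := Nat.mod_lt _ (by norm_num)
    obtain ⟨P, hP⟩ : ∃ P, P = u * (u + 1) := ⟨_, rfl⟩
    rw [← hP] at hPdiv ⊢
    omega
  -- upper bound on K
  have hlt : K / 8 < (u + 2) * (u + 2) := by
    have := Nat.lt_succ_sqrt' (K / 8)
    rw [← hu₀] at this
    have h4 : (u₀.succ) ^ 2 = (u + 2) * (u + 2) := by rw [hu, Nat.succ_eq_add_one]; ring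
    rw [h4] at this; exact this
  have hKlt : K < 8 * ((u + 2) * (u + 2)) := by
    have h1 := Nat.div_add_mod K 8
    have h2 : K % 8 < 8 := Nat.mod_lt _ (by norm_num)
    obtain ⟨S, hS⟩ : ∃ S, S = (u + 2) * (u + 2) := ⟨_, rfl⟩
    rw [← hS] at hlt ⊢
    omega
  obtain ⟨R, hRdef⟩ := Nat.exists_eq_add_of_le hPK
  -- R < 24u + 32
  have hring : (u + 2) * (u + 2) = u * (u + 1) + (3 * u + 4) := by ring
  have hRlt : R < 24 * u + 32 := by
    obtain ⟨P, hP⟩ : ∃ P, P = u * (u + 1) := ⟨_, rfl⟩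
    rw [← hP] at hRdef
    rw [hring, ← hP] at hKlt
    omega
  -- R is even
  obtain ⟨Q, hQ⟩ : ∃ Q, R = 2 * Q := by
    obtain ⟨P, hP⟩ : ∃ P, P = u * (u + 1) := ⟨_, rfl⟩
    have hPe : 2 * (u * (u + 1)) = 2 * P + 0 := by omega
    have : Even (u * (u + 1)) := Nat.even_mul_succ_self u
    obtain ⟨p, hp⟩ := this
    rw [hp] at hRdef
    exact ⟨(K - 8 * (p + p)) / 2, by omega⟩
  have hQlt : Q ≤ 12 * u + 16 := by omega
  obtain ⟨d, hd⟩ : ∃ d, u = c + d := ⟨u - c, by omega⟩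
  have hd50 : c + 50 ≤ d + c := by omega
  have hQd : Q ≤ d * d := by
    have h50 : 50 * d ≤ d * d := Nat.mul_le_mul_right d (by omega)
    obtain ⟨D, hD⟩ : ∃ D, D = d * d := ⟨_, rfl⟩
    rw [← hD] at h50 ⊢
    omega
  obtain ⟨v1, v2, v3, v4, hv⟩ := Nat.sum_four_squares Q
  simp only [pow_two] at hv
  have hv1 : v1 ≤ d := sq_le_sq_nat (by nlinarith)
  have hv2 : v2 ≤ d := sq_le_sq_nat (by nlinarith)
  have hv3 : v3 ≤ d := sq_le_sq_nat (by nlinarith)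
  have hv4 : v4 ≤ d := sq_le_sq_nat (by nlinarith)
  set g : ℕ → ℕ := fun i =>
    if i = 0 then u + v1 else if i = 1 then u - v1 else
    if i = 2 then u + v2 else if i = 3 then u - v2 else
    if i = 4 then u + v3 else if i = 5 then u - v3 else
    if i = 6 then u + v4 else if i = 7 then u - v4 else c with hg
  refine ⟨fun i => g i.val, fun i => ?_, ?_⟩
  · simp only [hg]; split_ifs <;> omega
  · have h80 : ∑ i : Fin 80, g i.val * (g i.val + 1)
        = ∑ i ∈ Finset.range 80, g i * (g i + 1) :=
      Fin.sum_univ_eq_sum_range (fun i => g i * (g i + 1)) 80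
    rw [h80]
    have hsplit : ∑ i ∈ Finset.range 8, (g i * (g i + 1)) +
        ∑ i ∈ Finset.Ico 8 80, (g i * (g i + 1)) = ∑ i ∈ Finset.range 80, (g i * (g i + 1)) := by
      rw [Finset.range_eq_Ico]
      exact Finset.sum_Ico_consecutive _ (by norm_num) (by norm_num)
    rw [← hsplit]
    have htail : ∑ i ∈ Finset.Ico 8 80, (g i * (g i + 1)) = 72 * (c * (c + 1)) := by
      have : ∀ i ∈ Finset.Ico 8 80, g i * (g i + 1) = c * (c + 1) := by
        intro i hi
        rw [Finset.mem_Ico] at hi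
        have hgi : g i = c := by simp only [hg]; split_ifs <;> omega
        rw [hgi]
      rw [Finset.sum_congr rfl this, Finset.sum_const, Nat.card_Ico, smul_eq_mul]
    rw [htail]
    have hhead : ∑ i ∈ Finset.range 8, (g i * (g i + 1)) =
        ((u + v1) * ((u + v1) + 1) + (u - v1) * ((u - v1) + 1)) +
        ((u + v2) * ((u + v2) + 1) + (u - v2) * ((u - v2) + 1)) +
        ((u + v3) * ((u + v3) + 1) + (u - v3) * ((u - v3) + 1)) +
        ((u + v4) * ((u + v4) + 1) + (u - v4) * ((u - v4) + 1)) := by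
      simp only [hg, Finset.sum_range_succ, Finset.sum_range_zero]
      norm_num
      ring
    rw [hhead,
      pair_pronic u v1 (by omega), pair_pronic u v2 (by omega),
      pair_pronic u v3 (by omega), pair_pronic u v4 (by omega)]
    obtain ⟨P, hP⟩ : ∃ P, P = u * (u + 1) := ⟨_, rfl⟩
    obtain ⟨W1, hW1⟩ : ∃ W1, W1 = v1 * v1 := ⟨_, rfl⟩
    obtain ⟨W2, hW2⟩ : ∃ W2, W2 = v2 * v2 := ⟨_, rfl⟩
    obtain ⟨W3, hW3⟩ : ∃ W3, W3 = v3 * v3 := ⟨_, rfl⟩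
    obtain ⟨W4, hW4⟩ : ∃ W4, W4 = v4 * v4 := ⟨_, rfl⟩
    rw [← hP, ← hW1, ← hW2, ← hW3, ← hW4]
    rw [← hP] at hRdef
    rw [← hW1, ← hW2, ← hW3, ← hW4] at hv
    omega
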